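/- Let k be a commutative ring and let C be an EI category with object set ℕ satisfying the standing conditions, and assume C is locally Noetherian over k. Let V and W be finitely generated C-modules. Then there exists N ∈ ℕ such that for all n ≥ N, there is an isomorphism of k-modules Ext^1_C(V, W) ≅ Ext^1_{C_n}(j*(V), j*(W)), where j : C_n → C is the inclusion of the full subcategory on {0,1,…,n} and j* is precomposition with j. -/

import Mathlib

open CategoryTheory CategoryTheory.Limits

attribute [local instance] CategoryTheory.Abelian.hasFiniteBiproducts

section EI

variable [Category.{0} ℕ]

/-- The standing conditions on the category `C` (whose set of objects is `ℕ`):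
every endomorphism is an isomorphism (`C` is an EI category); `C(m,n) = ∅` when
`m > n`; `C(m,n)` is a nonempty finite set when `m ≤ n`; and for `m ≤ l ≤ n` the
composition map `C(l,n) × C(m,l) → C(m,n)` is surjective. -/
def EIStanding : Prop :=
  (∀ (n : ℕ) (f : n ⟶ n), IsIso f) ∧
  (∀ ⦃m n : ℕ⦄, n < m → IsEmpty (m ⟶ n)) ∧
  (∀ ⦃m n : ℕ⦄, m ≤ n → Nonempty (m ⟶ n)) ∧
  (∀ m n : ℕ, Finite (m ⟶ n)) ∧
  (∀ ⦃m l n : ℕ⦄, m ≤ l → l ≤ n → ∀ h : m ⟶ n, ∃ (g : m ⟶ l) (f : l ⟶ n), g ≫ f = h)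

/-- The free `C`-module `kC e_n`, sending `m` to the free `k`-module on the
hom-set `C(n, m)`. -/
noncomputable def EIfree (k : Type) [CommRing k] (n : ℕ) : ℕ ⥤ ModuleCat k :=
  coyoneda.obj (Opposite.op n) ⋙ ModuleCat.free k

/-- A `C`-module is finitely generated if it admits an epimorphism from a finite
direct sum `⨁ᵢ kC e_{nᵢ}` of free modules. -/
noncomputable def EIFinGen (k : Type) [CommRing k] (V : ℕ ⥤ ModuleCat k) : Prop :=
  ∃ (r : ℕ) (a : Fin r → ℕ) (p : (⨁ fun i : Fin r => EIfree k (a i)) ⟶ V), Epi p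

/-- `C` is locally Noetherian over `k`: every subfunctor of a finitely generated
`C`-module is finitely generated, i.e. the source of any monomorphism into a
finitely generated `C`-module is finitely generated. -/
noncomputable def EILocNoeth (k : Type) [CommRing k] : Prop :=
  ∀ (V W : ℕ ⥤ ModuleCat k) (f : W ⟶ V), Mono f → EIFinGen k V → EIFinGen k W

/-- The full subcategory `C_n` of `C` on the objects `{0, 1, …, n}`. -/
abbrev EIsub (n : ℕ) := ObjectProperty.FullSubcategory (fun m : ℕ => m ≤ n)

/-- A `C`-module (resp. `C_n`-module) is finite dimensional over a field `k` if
all its values are finite dimensional and all but finitely many vanish. -/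
def EIFinDim (k : Type) [Field k] (V : ℕ ⥤ ModuleCat k) : Prop :=
  (∀ m : ℕ, Module.Finite k (V.obj m)) ∧ ∃ N : ℕ, ∀ m : ℕ, N < m → IsZero (V.obj m)

/-- `C` satisfies the transitivity condition: for each `n`, the group `C(n+1,n+1)`
acts transitively on `C(n,n+1)` by postcomposition. -/
def EITransitive : Prop :=
  ∀ (n : ℕ) (f g : (n : ℕ) ⟶ (n + 1 : ℕ)), ∃ h : (n + 1 : ℕ) ⟶ (n + 1 : ℕ), f ≫ h = g

/-- `0` is an initial object of `C`: `C(0,n)` is a singleton for every `n`. -/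
def EIInitialZero : Prop :=
  ∀ n : ℕ, Nonempty ((0 : ℕ) ⟶ n) ∧ Subsingleton ((0 : ℕ) ⟶ n)

end EI

namespace EIAux

open Opposite

section Generic

variable {k : Type} [CommRing k] {𝒞 : Type} [Category.{0} 𝒞]

/-- Maps out of the free module on a representable are given by elements. -/
noncomputable def fEquiv (c : 𝒞) (W : 𝒞 ⥤ ModuleCat k) :
    ((coyoneda.obj (op c) ⋙ ModuleCat.free k) ⟶ W) ≃ W.obj c where
  toFun φ := φ.app c (ModuleCat.freeMk (𝟙 c))
  invFun w :=
    { app := fun m => ModuleCat.freeDesc (M := W.obj m) (TypeCat.ofHom (fun (f : c ⟶ m) => W.map f w))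
      naturality := fun m m' g => by
        apply ModuleCat.free_hom_ext
        intro f
        simp [ModuleCat.free_map_apply] }
  left_inv φ := by
    apply NatTrans.ext
    funext m
    apply ModuleCat.free_hom_ext
    intro f
    have h := ConcreteCategory.congr_hom (φ.naturality (X := c) (Y := m) f) (ModuleCat.freeMk (𝟙 c))
    simp only [comp_apply, Functor.comp_map, ModuleCat.free_map_apply, Category.id_comp] at h
    simpa [ModuleCat.free_map_apply] using h.symm
  right_inv w := by simp

lemma fEquiv_comp {c : 𝒞} {W W' : 𝒞 ⥤ ModuleCat k}
    (φ : (coyoneda.obj (op c) ⋙ ModuleCat.free k) ⟶ W) (e : W ⟶ W') :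
    fEquiv c W' (φ ≫ e) = e.app c (fEquiv c W φ) := by rfl

instance fProjective (c : 𝒞) : Projective (coyoneda.obj (op c) ⋙ ModuleCat.free k) where
  factors {E X} f e he := by
    have : Epi (e.app c) := inferInstance
    obtain ⟨x, hx⟩ := (ModuleCat.epi_iff_surjective (e.app c)).1 this (fEquiv c X f)
    refine ⟨(fEquiv c E).symm x, (fEquiv c X).injective ?_⟩
    rw [fEquiv_comp, Equiv.apply_symm_apply, hx]

end Generic

section ExactAux

variable {A : Type*} [Category A] [Abelian A]

lemma exact_aux0 {X Y G : A} (f : X ⟶ Y) (e : G ⟶ kernel f) [Epi e] :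
    (ShortComplex.mk (e ≫ kernel.ι f) f (by simp)).Exact := by
  let α : ShortComplex.mk (e ≫ kernel.ι f) f (by simp) ⟶
      ShortComplex.mk (kernel.ι f) f (by simp) :=
    { τ₁ := e, τ₂ := 𝟙 _, τ₃ := 𝟙 _ }
  have : Epi α.τ₁ := by dsimp [α]; infer_instance
  have : IsIso α.τ₂ := by dsimp [α]; infer_instance
  have : Mono α.τ₃ := by dsimp [α]; infer_instance
  rw [ShortComplex.exact_iff_of_epi_of_isIso_of_mono α]
  exact ShortComplex.exact_of_f_is_kernel _ (kernelIsKernel f)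

lemma exact_aux {X Y Z G : A} (f : X ⟶ Y) (m : Y ⟶ Z) [Mono m] (e : G ⟶ kernel f) [Epi e] :
    (ShortComplex.mk (e ≫ kernel.ι f) (f ≫ m)
      (by rw [Category.assoc, kernel.condition_assoc, zero_comp, comp_zero])).Exact := by
  let α : ShortComplex.mk (e ≫ kernel.ι f) (f ≫ m)
        (by rw [Category.assoc, kernel.condition_assoc, zero_comp, comp_zero]) ⟶
      ShortComplex.mk (kernel.ι f) (f ≫ m) (by rw [kernel.condition_assoc, zero_comp]) :=
    { τ₁ := e, τ₂ := 𝟙 _, τ₃ := 𝟙 _ }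
  have : Epi α.τ₁ := by dsimp [α]; infer_instance
  have : IsIso α.τ₂ := by dsimp [α]; infer_instance
  have : Mono α.τ₃ := by dsimp [α]; infer_instance
  rw [ShortComplex.exact_iff_of_epi_of_isIso_of_mono α]
  exact ShortComplex.exact_of_f_is_kernel _ (isKernelCompMono (kernelIsKernel f) m rfl)

end ExactAux

section Res

variable [Category.{0} ℕ] {k : Type} [CommRing k]

instance (a : ℕ) : Projective (EIfree k a) := fProjective a

noncomputable def covR {A : ℕ ⥤ ModuleCat k} (hA : EIFinGen k A) : ℕ := hA.choose

noncomputable def covD {A : ℕ ⥤ ModuleCat k} (hA : EIFinGen k A) : Fin (covR hA) → ℕ :=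
  hA.choose_spec.choose

noncomputable def covObj {A : ℕ ⥤ ModuleCat k} (hA : EIFinGen k A) : ℕ ⥤ ModuleCat k :=
  ⨁ fun i => EIfree k (covD hA i)

noncomputable def covπ {A : ℕ ⥤ ModuleCat k} (hA : EIFinGen k A) : covObj hA ⟶ A :=
  hA.choose_spec.choose_spec.choose

instance covπ_epi {A : ℕ ⥤ ModuleCat k} (hA : EIFinGen k A) : Epi (covπ hA) :=
  hA.choose_spec.choose_spec.choose_spec

lemma covObj_fg {A : ℕ ⥤ ModuleCat k} (hA : EIFinGen k A) : EIFinGen k (covObj hA) :=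
  ⟨covR hA, covD hA, 𝟙 (covObj hA), by exact (inferInstance : Epi (𝟙 (covObj hA)))⟩

lemma ker_fg (hN : EILocNoeth k) {A : ℕ ⥤ ModuleCat k} (hA : EIFinGen k A) :
    EIFinGen k (kernel (covπ hA)) :=
  hN _ _ (kernel.ι (covπ hA)) inferInstance (covObj_fg hA)

variable (hN : EILocNoeth k) (V : ℕ ⥤ ModuleCat k) (hV : EIFinGen k V)

noncomputable abbrev syz : ℕ → Σ' A : ℕ ⥤ ModuleCat k, EIFinGen k A :=
  fun i => Nat.rec ⟨V, hV⟩ (fun _ p => ⟨kernel (covπ p.2), ker_fg hN p.2⟩) i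

noncomputable abbrev resX (i : ℕ) : ℕ ⥤ ModuleCat k := covObj (syz hN V hV i).2

noncomputable def resd (i : ℕ) : resX hN V hV (i + 1) ⟶ resX hN V hV i :=
  covπ (syz hN V hV (i + 1)).2 ≫ kernel.ι (covπ (syz hN V hV i).2)

lemma resd_sq (i : ℕ) : resd hN V hV (i + 1) ≫ resd hN V hV i = 0 := by
  dsimp [resd]
  rw [Category.assoc, kernel.condition_assoc, zero_comp, comp_zero]

noncomputable def resC : ChainComplex (ℕ ⥤ ModuleCat k) ℕ :=
  ChainComplex.of (resX hN V hV) (resd hN V hV) (resd_sq hN V hV)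

lemma resC_d_1_0 : (resC hN V hV).d 1 0 = resd hN V hV 0 :=
  ChainComplex.of_d (resX hN V hV) (resd hN V hV) 0

lemma resC_exactAt_succ (n : ℕ) : (resC hN V hV).ExactAt (n + 1) := by
  rw [HomologicalComplex.exactAt_iff' _ (n + 1 + 1) (n + 1) n (by simp) (by simp)]
  dsimp [HomologicalComplex.sc', HomologicalComplex.shortComplexFunctor', resC]
  simp only [ChainComplex.of_d]
  exact exact_aux (Y := kernel (covπ (syz hN V hV n).2)) (covπ (syz hN V hV (n + 1)).2) (kernel.ι (covπ (syz hN V hV n).2))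
    (covπ (syz hN V hV (n + 2)).2)

noncomputable def myRes : ProjectiveResolution V where
  complex := resC hN V hV
  projective n := inferInstanceAs (Projective (⨁ fun i => EIfree k (covD (syz hN V hV n).2 i)))
  π := (ChainComplex.toSingle₀Equiv _ _).symm ⟨covπ (syz hN V hV 0).2, by
    rw [resC_d_1_0]
    dsimp [resd]
    erw [Category.assoc, kernel.condition, comp_zero]⟩
  quasiIso := ⟨fun n => by
    cases n with
    | zero =>
      rw [ChainComplex.quasiIsoAt₀_iff, ShortComplex.quasiIso_iff_of_zeros']
      · refine (ShortComplex.exact_and_epi_g_iff_of_iso ?_).2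
          ⟨exact_aux0 (X := covObj (syz hN V hV 0).2) (Y := V) (covπ (syz hN V hV 0).2) (covπ (syz hN V hV 1).2), ?_⟩
        · exact ShortComplex.isoMk (Iso.refl _) (Iso.refl _) (Iso.refl _)
            (by erw [Category.id_comp]) (by erw [Category.id_comp])
        · dsimp; infer_instance
      all_goals rfl
    | succ n =>
      rw [quasiIsoAt_iff_exactAt']
      · apply resC_exactAt_succ
      · apply ChainComplex.exactAt_succ_single_obj⟩

end Res

section Restrict

variable [Category.{0} ℕ] {k : Type} [CommRing k]

/-- The restriction functor `j^*`. -/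
abbrev resF (k : Type) [CommRing k] (n : ℕ) : (ℕ ⥤ ModuleCat k) ⥤ (EIsub n ⥤ ModuleCat k) :=
  (Functor.whiskeringLeft (EIsub n) ℕ (ModuleCat k)).obj (ObjectProperty.ι _)

instance (n : ℕ) : (resF k n).Additive := { map_add := rfl }

lemma projective_of_isZero {A : Type*} [Category A] [Limits.HasZeroMorphisms A]
    {X : A} (h : IsZero X) : Projective X :=
  ⟨fun _ _ _ => ⟨0, h.eq_of_src _ _⟩⟩

/-- The restriction of `kC e_a` to `C_n` is the free module on the representable. -/
noncomputable def subIso (n a : ℕ) (h : a ≤ n) :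
    (resF k n).obj (EIfree k a) ≅ coyoneda.obj (op (⟨a, h⟩ : EIsub n)) ⋙ ModuleCat.free k :=
  NatIso.ofComponents (fun x => (ModuleCat.free k).mapIso
    (Equiv.toIso
      { toFun := fun (f : a ⟶ x.obj) => (ObjectProperty.homMk f : (⟨a, h⟩ : EIsub n) ⟶ x)
        invFun := fun g => g.hom
        left_inv := fun _ => rfl
        right_inv := fun _ => rfl })) (by
    intro x y g
    change (ModuleCat.free k).map _ ≫ (ModuleCat.free k).map _ =
      (ModuleCat.free k).map _ ≫ (ModuleCat.free k).map _
    rw [← Functor.map_comp, ← Functor.map_comp]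
    rfl)

lemma res_ext (n a : ℕ) (h : a ≤ n) {Z : EIsub n ⥤ ModuleCat k}
    (χ₁ χ₂ : (resF k n).obj (EIfree k a) ⟶ Z)
    (hχ : χ₁.app ⟨a, h⟩ (ModuleCat.freeMk (𝟙 a)) = χ₂.app ⟨a, h⟩ (ModuleCat.freeMk (𝟙 a))) :
    χ₁ = χ₂ := by
  rw [← cancel_epi (subIso (k := k) n a h).inv]
  apply (fEquiv (k := k) (𝒞 := EIsub n) ⟨a, h⟩ Z).injective
  rw [fEquiv_comp, fEquiv_comp]
  have e : fEquiv (k := k) (𝒞 := EIsub n) ⟨a, h⟩ _ (subIso n a h).inv = ModuleCat.freeMk (𝟙 a) :=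
    ModuleCat.free_map_apply _ _
  rw [e]
  exact hχ

lemma isZero_resF_EIfree (hC : EIStanding) (n a : ℕ) (h : n < a) :
    IsZero ((resF k n).obj (EIfree k a)) := by
  rw [Functor.isZero_iff]
  intro x
  haveI : IsEmpty (a ⟶ x.obj) := hC.2.1 (lt_of_le_of_lt x.property h)
  haveI : Subsingleton (((resF k n).obj (EIfree k a)).obj x) :=
    inferInstanceAs (Subsingleton ((a ⟶ x.obj) →₀ k))
  exact ModuleCat.isZero_of_subsingleton _

lemma proj_resF_EIfree (hC : EIStanding) (n a : ℕ) :
    Projective ((resF k n).obj (EIfree k a)) := by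
  by_cases h : a ≤ n
  · exact Projective.of_iso (subIso n a h).symm (fProjective (k := k) (𝒞 := EIsub n) ⟨a, h⟩)
  · exact projective_of_isZero (isZero_resF_EIfree hC n a (by omega))

lemma proj_resF_biprod (hC : EIStanding) (n r : ℕ) (a : Fin r → ℕ) :
    Projective ((resF k n).obj (⨁ fun i => EIfree k (a i))) := by
  haveI : ∀ i, Projective (((resF k n).obj ∘ fun i => EIfree k (a i)) i) :=
    fun i => proj_resF_EIfree hC n (a i)
  exact Projective.of_iso (Functor.mapBiproduct (resF k n) _).symm inferInstance

variable (hN : EILocNoeth k) (V : ℕ ⥤ ModuleCat k) (hV : EIFinGen k V)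

noncomputable abbrev resQC (n : ℕ) : ChainComplex (EIsub n ⥤ ModuleCat k) ℕ :=
  (Functor.mapHomologicalComplex (resF k n) _).obj (resC hN V hV)

noncomputable def resQ (hC : EIStanding) (n : ℕ) :
    ProjectiveResolution ((resF k n).obj V) where
  complex := resQC hN V hV n
  projective i := proj_resF_biprod hC n (covR (syz hN V hV i).2) (covD (syz hN V hV i).2)
  π := (Functor.mapHomologicalComplex (resF k n) _).map (myRes hN V hV).π ≫
    (HomologicalComplex.singleMapHomologicalComplex (resF k n) _ 0).hom.app V
  quasiIso := by
    have : (resF k n).PreservesHomology := inferInstance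
    have h1 : QuasiIso ((Functor.mapHomologicalComplex (resF k n) _).map (myRes hN V hV).π) :=
      HomologicalComplex.quasiIso_map_of_preservesHomology (hφ := (myRes hN V hV).quasiIso) _ _
    have h2 : QuasiIso ((HomologicalComplex.singleMapHomologicalComplex (resF k n)
      (ComplexShape.down ℕ) 0).hom.app V) := inferInstance
    exact quasiIso_comp (hφ := h1) (hφ' := h2) _ _

end Restrict

section Compare

variable [Category.{0} ℕ] {k : Type} [CommRing k]

/-- The comparison map on Hom-modules given by applying `j^*`. -/
noncomputable def rmap (n : ℕ) (A W : ℕ ⥤ ModuleCat k) :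
    ModuleCat.of k (A ⟶ W) ⟶ ModuleCat.of k ((resF k n).obj A ⟶ (resF k n).obj W) :=
  ModuleCat.ofHom
    { toFun := fun φ => (resF k n).map φ
      map_add' := fun _ _ => rfl
      map_smul' := fun _ _ => rfl }

lemma rmap_bijective (n r : ℕ) (a : Fin r → ℕ) (ha : ∀ t, a t ≤ n) (W : ℕ ⥤ ModuleCat k) :
    Function.Bijective
      (fun (φ : (⨁ fun t => EIfree k (a t)) ⟶ W) => (resF k n).map φ) := by
  constructor
  · intro φ ψ h
    apply biproduct.hom_ext'
    intro t
    apply (fEquiv (a t) W).injective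
    have h' : (resF k n).map (biproduct.ι (fun t => EIfree k (a t)) t ≫ φ) =
        (resF k n).map (biproduct.ι (fun t => EIfree k (a t)) t ≫ ψ) := by
      rw [Functor.map_comp, Functor.map_comp, show (resF k n).map φ = (resF k n).map ψ from h]
    exact congrArg
      (fun (χ : (resF k n).obj (EIfree k (a t)) ⟶ (resF k n).obj W) =>
        χ.app ⟨a t, ha t⟩ (ModuleCat.freeMk (𝟙 (a t)))) h'
  · intro ψ
    refine ⟨biproduct.desc (fun t => (fEquiv (a t) W).symm
      (((resF k n).map (biproduct.ι (fun t => EIfree k (a t)) t) ≫ ψ).app ⟨a t, ha t⟩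
        (ModuleCat.freeMk (𝟙 (a t))))), ?_⟩
    have hext : ∀ (Z : EIsub n ⥤ ModuleCat k)
        (χ₁ χ₂ : (resF k n).obj (⨁ fun t => EIfree k (a t)) ⟶ Z),
        (∀ t, (resF k n).map (biproduct.ι (fun t => EIfree k (a t)) t) ≫ χ₁ =
          (resF k n).map (biproduct.ι (fun t => EIfree k (a t)) t) ≫ χ₂) → χ₁ = χ₂ := by
      intro Z χ₁ χ₂ hτ
      rw [← cancel_epi (Functor.mapBiproduct (resF k n) (fun t => EIfree k (a t))).inv]
      rw [Functor.mapBiproduct_inv]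
      apply biproduct.hom_ext'
      intro t
      rw [biproduct.ι_desc_assoc, biproduct.ι_desc_assoc]
      exact hτ t
    apply hext
    intro t
    erw [← Functor.map_comp, biproduct.ι_desc]
    apply res_ext n (a t) (ha t)
    show ((fEquiv (a t) W).symm _).app (a t) (ModuleCat.freeMk (𝟙 (a t))) = _
    rw [show (((fEquiv (a t) W).symm
      (((resF k n).map (biproduct.ι (fun t => EIfree k (a t)) t) ≫ ψ).app ⟨a t, ha t⟩
        (ModuleCat.freeMk (𝟙 (a t))))).app (a t) (ModuleCat.freeMk (𝟙 (a t))) : W.obj (a t)) =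
      fEquiv (a t) W ((fEquiv (a t) W).symm
      (((resF k n).map (biproduct.ι (fun t => EIfree k (a t)) t) ≫ ψ).app ⟨a t, ha t⟩
        (ModuleCat.freeMk (𝟙 (a t))))) from rfl]
    rw [Equiv.apply_symm_apply]

variable (hN : EILocNoeth k) (V : ℕ ⥤ ModuleCat k) (hV : EIFinGen k V)

/-- The comparison cochain map between the Hom complexes. -/
noncomputable def rChainMap (n : ℕ) (W : ℕ ⥤ ModuleCat k) :
    (resC hN V hV).linearYonedaObj k W ⟶
      (resQC hN V hV n).linearYonedaObj k ((resF k n).obj W) where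
  f i := rmap n (resX hN V hV i) W
  comm' i j hij := by
    ext φ
    show (resF k n).map ((resC hN V hV).d j i ≫ φ) =
      (resQC hN V hV n).d j i ≫ (resF k n).map φ
    erw [Functor.map_comp]
    rfl

end Compare

end EIAux

/-- **Lemma (reduction to `C_n`).** Let `k` be a commutative ring and `C` an EI
category with object set `ℕ` satisfying the standing conditions, locally Noetherian
over `k`. For finitely generated `C`-modules `V, W` there exists `N` such that for
all `n ≥ N` there is an isomorphism of `k`-modules
`Ext¹_C(V, W) ≅ Ext¹_{C_n}(j*(V), j*(W))`. -/
theorem EI.ext_one_reduction [Category.{0} ℕ] (k : Type) [CommRing k]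
    [EnoughProjectives (ℕ ⥤ ModuleCat k)]
    [∀ n : ℕ, EnoughProjectives (EIsub n ⥤ ModuleCat k)]
    (hC : EIStanding) (hN : EILocNoeth k)
    (V W : ℕ ⥤ ModuleCat k) (hV : EIFinGen k V) (hW : EIFinGen k W) :
    ∃ N : ℕ, ∀ n : ℕ, N ≤ n →
      Nonempty ((((Ext k (ℕ ⥤ ModuleCat k) 1).obj (Opposite.op V)).obj W) ≅
        (((Ext k (EIsub n ⥤ ModuleCat k) 1).obj
            (Opposite.op (ObjectProperty.ι _ ⋙ V))).obj
          (ObjectProperty.ι _ ⋙ W))) := by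
  classical
  refine ⟨Finset.sup (Finset.range 3)
    (fun i => Finset.univ.sup (EIAux.covD (EIAux.syz hN V hV i).2)), fun n hn => ?_⟩
  have hb : ∀ i, i < 3 → ∀ t, EIAux.covD (EIAux.syz hN V hV i).2 t ≤ n := by
    intro i hi t
    refine le_trans (le_trans (Finset.le_sup (Finset.mem_univ t)) ?_) hn
    exact Finset.le_sup (f := fun i => Finset.univ.sup (EIAux.covD (EIAux.syz hN V hV i).2))
      (Finset.mem_range.2 hi)
  haveI i0 : IsIso ((EIAux.rChainMap hN V hV n W).f 0) := by
    rw [CategoryTheory.ConcreteCategory.isIso_iff_bijective]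
    exact EIAux.rmap_bijective n _ _ (hb 0 (by omega)) W
  haveI i1 : IsIso ((EIAux.rChainMap hN V hV n W).f 1) := by
    rw [CategoryTheory.ConcreteCategory.isIso_iff_bijective]
    exact EIAux.rmap_bijective n _ _ (hb 1 (by omega)) W
  haveI i2 : IsIso ((EIAux.rChainMap hN V hV n W).f 2) := by
    rw [CategoryTheory.ConcreteCategory.isIso_iff_bijective]
    exact EIAux.rmap_bijective n _ _ (hb 2 (by omega)) W
  have hq : QuasiIsoAt (EIAux.rChainMap hN V hV n W) 1 := by
    rw [quasiIsoAt_iff' _ 0 1 2 (by simp) (by simp)]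
    haveI : IsIso ((HomologicalComplex.shortComplexFunctor' _ _ 0 1 2).map
        (EIAux.rChainMap hN V hV n W)).τ₁ := i0
    haveI : IsIso ((HomologicalComplex.shortComplexFunctor' _ _ 0 1 2).map
        (EIAux.rChainMap hN V hV n W)).τ₂ := i1
    haveI : IsIso ((HomologicalComplex.shortComplexFunctor' _ _ 0 1 2).map
        (EIAux.rChainMap hN V hV n W)).τ₃ := i2
    haveI : IsIso ((HomologicalComplex.shortComplexFunctor' _ _ 0 1 2).map
        (EIAux.rChainMap hN V hV n W)) := ShortComplex.isIso_of_isIso _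
    infer_instance
  haveI hiso : IsIso (HomologicalComplex.homologyMap (EIAux.rChainMap hN V hV n W) 1) :=
    (quasiIsoAt_iff_isIso_homologyMap _ _).1 hq
  exact ⟨((EIAux.myRes hN V hV).isoExt 1 W) ≪≫
    @asIso _ _ _ _ (HomologicalComplex.homologyMap (EIAux.rChainMap hN V hV n W) 1) hiso ≪≫
    ((EIAux.resQ hN V hV hC n).isoExt 1 ((EIAux.resF k n).obj W)).symm⟩
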